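/- A one-hidden-layer network with Leaky ReLU activations can be exactly represented by an oblique decision tree of depth n in which the leaf associated with pattern S ⊆ {1,…,n} computes x ↦ Σ_{k∈S} v_k (W_k·x + b_k) + Σ_{k∉S} v_k · a · (W_k·x + b_k) + c. -/

import Mathlib

noncomputable def LReLU (a z : ℝ) : ℝ := max z (a * z)

inductive ObliqueTree (d : ℕ) where
  | leaf (p : Fin d → ℝ) (v : ℝ)
  | node (p : Fin d → ℝ) (v : ℝ) (l r : ObliqueTree d)

noncomputable def ObliqueTree.eval {d : ℕ} : ObliqueTree d → (Fin d → ℝ) → ℝ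
  | .leaf p v, x => (∑ i, p i * x i) + v
  | .node p v l r, x =>
      if (∑ i, p i * x i) + v ≤ 0 then l.eval x else r.eval x

def ObliqueTree.depth {d : ℕ} : ObliqueTree d → ℕ
  | .leaf _ _ => 0
  | .node _ _ l r => max l.depth r.depth + 1

lemma lrelu_nonpos (a z : ℝ) (ha1 : a < 1) (hz : z ≤ 0) : LReLU a z = a * z := by
  unfold LReLU; rw [max_eq_right]; nlinarith

lemma lrelu_pos (a z : ℝ) (ha1 : a < 1) (hz : ¬ z ≤ 0) : LReLU a z = z := by
  unfold LReLU; rw [max_eq_left]; push_neg at hz; nlinarith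

lemma aux_tree {d : ℕ} (a : ℝ) (ha1 : a < 1) :
    ∀ n (W : Fin n → Fin d → ℝ) (b v : Fin n → ℝ) (q : Fin d → ℝ) (r : ℝ),
    ∃ T : ObliqueTree d, T.depth = n ∧ ∀ x : Fin d → ℝ,
      T.eval x = (∑ i, q i * x i) + r + ∑ k, v k * LReLU a ((∑ i, W k i * x i) + b k) := by
  intro n
  induction n with
  | zero =>
    intro W b v q r
    exact ⟨.leaf q r, rfl, fun x => by simp [ObliqueTree.eval]⟩
  | succ n ih =>
    intro W b v q r
    obtain ⟨T1, hd1, he1⟩ := ih (fun k => W k.succ) (fun k => b k.succ) (fun k => v k.succ)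
      (fun i => q i + a * v 0 * W 0 i) (r + a * v 0 * b 0)
    obtain ⟨T2, hd2, he2⟩ := ih (fun k => W k.succ) (fun k => b k.succ) (fun k => v k.succ)
      (fun i => q i + v 0 * W 0 i) (r + v 0 * b 0)
    refine ⟨.node (W 0) (b 0) T1 T2, by simp [ObliqueTree.depth, hd1, hd2], fun x => ?_⟩
    rw [Fin.sum_univ_succ]
    show (if (∑ i, W 0 i * x i) + b 0 ≤ 0 then T1.eval x else T2.eval x) = _
    by_cases h : (∑ i, W 0 i * x i) + b 0 ≤ 0
    · rw [if_pos h, he1, lrelu_nonpos a _ ha1 h]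
      simp only [add_mul, Finset.sum_add_distrib]
      simp only [mul_add, Finset.mul_sum]
      ring
    · rw [if_neg h, he2, lrelu_pos a _ ha1 h]
      simp only [add_mul, Finset.sum_add_distrib]
      simp only [mul_add, Finset.mul_sum]
      ring

lemma net_split {m : ℕ} (a : ℝ) (ha1 : a < 1) (v z : Fin m → ℝ) :
    ∑ k, v k * LReLU a (z k) =
      (∑ k ∈ Finset.univ.filter (fun k => z k > 0), v k * z k) +
      (∑ k ∈ Finset.univ.filter (fun k => ¬(z k > 0)), v k * a * z k) := by
  rw [← Finset.sum_filter_add_sum_filter_not Finset.univ (fun k => z k > 0)]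
  congr 1
  · apply Finset.sum_congr rfl
    intro k hk
    simp only [Finset.mem_filter] at hk
    rw [lrelu_pos a _ ha1 (not_le.mpr hk.2)]
  · apply Finset.sum_congr rfl
    intro k hk
    simp only [Finset.mem_filter] at hk
    rw [lrelu_nonpos a _ ha1 (not_lt.mp hk.2)]
    ring

/-- A one-hidden-layer Leaky-ReLU network is exactly represented by a depth-`n`
oblique tree whose leaf for the realized pattern `S` computes
`∑_{k∈S} v_k (W_k·x + b_k) + ∑_{k∉S} v_k a (W_k·x + b_k) + c`. -/
theorem leaky_relu_net_eq_oblique_tree {d n : ℕ} (a : ℝ) (ha : 0 < a) (ha1 : a < 1)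
    (W : Fin n → Fin d → ℝ) (b : Fin n → ℝ) (v : Fin n → ℝ) (c : ℝ) :
    ∃ T : ObliqueTree d, T.depth = n ∧
      ∀ x : Fin d → ℝ,
        T.eval x = (∑ k, v k * LReLU a ((∑ i, W k i * x i) + b k)) + c ∧
        T.eval x =
          (∑ k ∈ Finset.univ.filter (fun k => (∑ i, W k i * x i) + b k > 0),
              v k * ((∑ i, W k i * x i) + b k)) +
          (∑ k ∈ Finset.univ.filter (fun k => ¬((∑ i, W k i * x i) + b k > 0)),
              v k * a * ((∑ i, W k i * x i) + b k)) + c := by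
  obtain ⟨T, hd, he⟩ := aux_tree a ha1 n W b v (fun _ => 0) c
  refine ⟨T, hd, fun x => ?_⟩
  have h1 : T.eval x = (∑ k, v k * LReLU a ((∑ i, W k i * x i) + b k)) + c := by
    rw [he x]; simp; ring
  refine ⟨h1, ?_⟩
  rw [h1, net_split a ha1 v (fun k => (∑ i, W k i * x i) + b k)]
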